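/- If 0 < w − z ≤ w_max − z_min < (4c√γ/(γ−1))·Arctan(1/√γ), γ > 1, and ρ ≥ 0 satisfies w − z = (4c√γ/(γ−1))·Arctan(kρ^{(γ−1)/2}/c), then √(P'(ρ)) = k√γ·ρ^{(γ−1)/2} < c, and equivalently ρ < c^{2/(γ−1)}·k^{−2/(γ−1)}·γ^{−1/(γ−1)}. -/
import Mathlib


open Real

/-- If `0 < w − z ≤ w_max − z_min < (4c√γ/(γ−1))·arctan(1/√γ)` and
`w − z = (4c√γ/(γ−1))·arctan(kρ^{(γ−1)/2}/c)`, then `√(P'(ρ)) = k√γ ρ^{(γ−1)/2} < c`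
and `ρ < c^{2/(γ−1)} k^{−2/(γ−1)} γ^{−1/(γ−1)}`. -/
theorem stmt3 (c k γ ρ w z wmax zmin : ℝ) (hc : 0 < c) (hk : 0 < k) (hγ : 1 < γ)
    (hρ : 0 ≤ ρ)
    (h1 : 0 < w - z) (h2 : w - z ≤ wmax - zmin)
    (h3 : wmax - zmin < (4 * c * Real.sqrt γ / (γ - 1)) * Real.arctan (1 / Real.sqrt γ))
    (hwz : w - z = (4 * c * Real.sqrt γ / (γ - 1)) * Real.arctan (k * ρ ^ ((γ - 1) / 2) / c)) :
    k * Real.sqrt γ * ρ ^ ((γ - 1) / 2) < c ∧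
      ρ < c ^ (2 / (γ - 1)) * k ^ (-(2 / (γ - 1))) * γ ^ (-(1 / (γ - 1))) := by
  have hγ0 : 0 < γ := by linarith
  have hs : 0 < Real.sqrt γ := Real.sqrt_pos.mpr hγ0
  have hA : 0 < 4 * c * Real.sqrt γ / (γ - 1) := div_pos (by positivity) (by linarith)
  have harc : Real.arctan (k * ρ ^ ((γ - 1) / 2) / c) < Real.arctan (1 / Real.sqrt γ) := by
    have h := lt_of_le_of_lt (hwz ▸ h2) h3
    exact (mul_lt_mul_iff_right₀ hA).mp h
  have hlt : k * ρ ^ ((γ - 1) / 2) / c < 1 / Real.sqrt γ :=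
    Real.arctan_strictMono.lt_iff_lt.mp harc
  have h₁ : k * Real.sqrt γ * ρ ^ ((γ - 1) / 2) < c := by
    have := (div_lt_div_iff₀ hc hs).mp hlt
    nlinarith
  refine ⟨h₁, ?_⟩
  have he : 0 < (γ - 1) / 2 := by linarith
  have hρe : ρ ^ ((γ - 1) / 2) < c / (k * Real.sqrt γ) := by
    rw [lt_div_iff₀ (by positivity)]
    nlinarith
  have hρpow : 0 ≤ ρ ^ ((γ - 1) / 2) := Real.rpow_nonneg hρ _
  have key : ρ < (c / (k * Real.sqrt γ)) ^ (2 / (γ - 1)) := by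
    have h2' := Real.rpow_lt_rpow hρpow hρe
      (div_pos (by norm_num) (by linarith) : (0:ℝ) < 2 / (γ - 1))
    rwa [← Real.rpow_mul hρ,
      show (γ - 1) / 2 * (2 / (γ - 1)) = 1 by rw [div_mul_div_comm, mul_comm]; exact div_self (by nlinarith), Real.rpow_one] at h2'
  calc ρ < (c / (k * Real.sqrt γ)) ^ (2 / (γ - 1)) := key
    _ = c ^ (2 / (γ - 1)) * k ^ (-(2 / (γ - 1))) * γ ^ (-(1 / (γ - 1))) := by
      rw [Real.div_rpow hc.le (by positivity), Real.mul_rpow hk.le hs.le,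
        Real.rpow_neg hk.le, Real.rpow_neg hγ0.le,
        Real.sqrt_eq_rpow γ,
        ← Real.rpow_mul hγ0.le, show (1:ℝ)/2 * (2 / (γ - 1)) = 1 / (γ - 1) by ring]
      rw [div_eq_mul_inv, mul_inv]
      ring
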